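/- Let p, q ∈ (1,∞) and n a nonnegative integer. Then ∫₀^{π_{p,q}/2} cos_{p,q}^{pn}(t) dt = [(1/p*)_n / ((1/p* + 1/q)_n)] · π_{p,q}/2, where p* = p/(p−1). -/

import Mathlib

open Set MeasureTheory Filter

open intervalIntegral

/-- Generalized arcsine: `arcsin_{p,q}(x) = ∫₀ˣ (1 - tᵠ)^(-1/p) dt`. -/
noncomputable def gArcsin (p q x : ℝ) : ℝ := ∫ t in (0:ℝ)..x, (1 - t ^ q) ^ (-(1 / p))

/-- Generalized pi: `π_{p,q} = 2 ∫₀¹ (1 - tᵠ)^(-1/p) dt`. -/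
noncomputable def gPi (p q : ℝ) : ℝ := 2 * gArcsin p q 1

/-- `S` is the generalized sine `sin_{p,q}` (the inverse of `gArcsin p q` on `[0,1]`). -/
def IsGSin (p q : ℝ) (S : ℝ → ℝ) : Prop :=
  ∀ y ∈ Icc (0:ℝ) 1, S (gArcsin p q y) = y

/-- `C` is the generalized cosine `cos_{p,q}`, the derivative of `S = sin_{p,q}`
on `[0, π_{p,q}/2]`. -/
def IsGCos (p q : ℝ) (S C : ℝ → ℝ) : Prop :=
  ∀ x ∈ Icc (0:ℝ) (gPi p q / 2), HasDerivWithinAt S (C x) (Icc (0:ℝ) (gPi p q / 2)) x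


lemma contq {q : ℝ} (hq : 0 < q) : Continuous (fun y : ℝ => y ^ q) := by
  rw [continuous_iff_continuousAt]
  intro x
  exact Real.continuousAt_rpow_const x q (Or.inr hq.le)

lemma integrable_aux {q : ℝ} (hq : 1 < q) {e : ℝ} (he : -1 < e) :
    IntervalIntegrable (fun y : ℝ => (1 - y ^ q) ^ e) volume 0 1 := by
  have hq0 : (0:ℝ) < q := by linarith
  rcases le_or_gt 0 e with h0 | h0
  · apply Continuous.intervalIntegrable
    rw [continuous_iff_continuousAt]
    intro x
    exact (Real.continuousAt_rpow_const _ e (Or.inr h0)).comp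
      (continuous_const.sub (contq hq0)).continuousAt
  · have hint : IntervalIntegrable (fun y : ℝ => (1 - y) ^ e) volume 0 1 := by
      have h1 := ((intervalIntegrable_rpow' (a := 0) (b := 1) he).comp_sub_left 1).symm
      simpa using h1
    have hmeas : Measurable (fun y : ℝ => (1 - y ^ q) ^ e) := by measurability
    refine hint.mono_fun hmeas.aestronglyMeasurable ?_
    have hsub : (Set.uIoc (0:ℝ) 1) = Ioc (0:ℝ) 1 := by
      rw [uIoc_of_le]; norm_num
    rw [Filter.EventuallyLE, ae_restrict_iff' (by rw [hsub]; exact measurableSet_Ioc)]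
    refine Filter.Eventually.of_forall fun y hy => ?_
    rw [hsub] at hy
    simp only [Real.norm_eq_abs]
    rcases eq_or_lt_of_le hy.2 with rfl | hy1
    · simp [Real.one_rpow, sub_self, Real.zero_rpow (ne_of_lt h0)]
    · have hyq : y ^ q ≤ y := by
        calc y ^ q ≤ y ^ (1:ℝ) := Real.rpow_le_rpow_of_exponent_ge hy.1 hy1.le hq.le
        _ = y := Real.rpow_one y
      have h1y : 0 < 1 - y := by linarith
      have h1yq : 1 - y ≤ 1 - y ^ q := by linarith
      have hb := Real.rpow_le_rpow_of_nonpos h1y h1yq h0.le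
      rw [abs_of_nonneg (Real.rpow_nonneg (by linarith) e),
        abs_of_nonneg (Real.rpow_nonneg h1y.le e)]
      exact hb

lemma pos_aux {q y : ℝ} (hq : 0 < q) (hy0 : 0 ≤ y) (hy1 : y < 1) : 0 < 1 - y ^ q := by
  have : y ^ q < 1 := by
    rcases eq_or_lt_of_le hy0 with rfl | hy0
    · rw [Real.zero_rpow (ne_of_gt hq)]; norm_num
    · calc y ^ q = y ^ q := rfl
      _ < 1 := Real.rpow_lt_one hy0.le hy1 hq
  linarith

lemma deriv_F_aux {q a y : ℝ} (hq : 1 < q) (ha : 0 < a) (hy0 : 0 < y) (hy1 : y < 1) :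
    HasDerivAt (fun y : ℝ => y * (1 - y ^ q) ^ a)
      ((1 + a * q) * (1 - y ^ q) ^ a - a * q * (1 - y ^ q) ^ (a - 1)) y := by
  have hq0 : (0:ℝ) < q := by linarith
  have hbase : 0 < 1 - y ^ q := pos_aux hq0 hy0.le hy1
  have h1 : HasDerivAt (fun y : ℝ => y ^ q) (q * y ^ (q - 1)) y :=
    Real.hasDerivAt_rpow_const (Or.inl (ne_of_gt hy0))
  have h2 : HasDerivAt (fun y : ℝ => 1 - y ^ q) (-(q * y ^ (q - 1))) y := by
    have h2' := (hasDerivAt_const y (1:ℝ)).sub h1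
    rw [zero_sub] at h2'
    exact h2'
  have h3 : HasDerivAt (fun y : ℝ => (1 - y ^ q) ^ a)
      (a * (1 - y ^ q) ^ (a - 1) * -(q * y ^ (q - 1))) y := by
    have := (Real.hasDerivAt_rpow_const (p := a) (x := 1 - y ^ q) (Or.inl (ne_of_gt hbase)))
    exact this.comp y h2
  have h4 := (hasDerivAt_id y).mul h3
  refine h4.congr_deriv ?_
  have hyy : y * y ^ (q - 1) = y ^ q := by
    calc y * y ^ (q - 1) = y ^ (1:ℝ) * y ^ (q - 1) := by rw [Real.rpow_one]
    _ = y ^ (1 + (q - 1)) := (Real.rpow_add hy0 1 (q - 1)).symm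
    _ = y ^ q := by ring_nf
  have hz : (1 - y ^ q) ^ a = (1 - y ^ q) * (1 - y ^ q) ^ (a - 1) := by
    calc (1 - y ^ q) ^ a = (1 - y ^ q) ^ (1 + (a - 1)) := by ring_nf
    _ = (1 - y ^ q) ^ (1:ℝ) * (1 - y ^ q) ^ (a - 1) := Real.rpow_add hbase 1 (a - 1)
    _ = (1 - y ^ q) * (1 - y ^ q) ^ (a - 1) := by rw [Real.rpow_one]
  simp only [id_eq, one_mul]
  rw [show y * (a * (1 - y ^ q) ^ (a - 1) * -(q * y ^ (q - 1)))
      = -(a * q * (y * y ^ (q - 1)) * (1 - y ^ q) ^ (a - 1)) from by ring,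
    hyy]
  rw [hz]
  ring

lemma cont_pow_aux {q e : ℝ} (hq : 0 < q) (he : 0 ≤ e) :
    Continuous (fun y : ℝ => (1 - y ^ q) ^ e) := by
  rw [continuous_iff_continuousAt]
  intro x
  exact (Real.continuousAt_rpow_const _ e (Or.inr he)).comp
    (continuous_const.sub (contq hq)).continuousAt

lemma recursion_aux {q : ℝ} (hq : 1 < q) {a : ℝ} (ha : 0 < a) :
    (1 + a * q) * ∫ y in (0:ℝ)..1, (1 - y ^ q) ^ a =
      a * q * ∫ y in (0:ℝ)..1, (1 - y ^ q) ^ (a - 1) := by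
  have hq0 : (0:ℝ) < q := by linarith
  have hia : IntervalIntegrable (fun y : ℝ => (1 - y ^ q) ^ a) volume 0 1 :=
    integrable_aux hq (by linarith)
  have hia1 : IntervalIntegrable (fun y : ℝ => (1 - y ^ q) ^ (a - 1)) volume 0 1 :=
    integrable_aux hq (by linarith)
  have hcont : ContinuousOn (fun y : ℝ => y * (1 - y ^ q) ^ a) (Icc 0 1) :=
    (continuous_id.mul (cont_pow_aux hq0 ha.le)).continuousOn
  have hderiv : ∀ y ∈ Ioo (0:ℝ) 1,
      HasDerivWithinAt (fun y : ℝ => y * (1 - y ^ q) ^ a)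
        ((fun y : ℝ => (1 + a * q) * (1 - y ^ q) ^ a - a * q * (1 - y ^ q) ^ (a - 1)) y)
        (Ioi y) y := fun y hy =>
    (deriv_F_aux hq ha hy.1 hy.2).hasDerivWithinAt
  have hint : IntervalIntegrable
      (fun y : ℝ => (1 + a * q) * (1 - y ^ q) ^ a - a * q * (1 - y ^ q) ^ (a - 1))
      volume 0 1 := (hia.const_mul _).sub (hia1.const_mul _)
  have h := intervalIntegral.integral_eq_sub_of_hasDeriv_right_of_le zero_le_one hcont hderiv hint
  rw [intervalIntegral.integral_sub (hia.const_mul _) (hia1.const_mul _),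
    intervalIntegral.integral_const_mul, intervalIntegral.integral_const_mul] at h
  have h10 : (1:ℝ) * (1 - (1:ℝ) ^ q) ^ a - 0 * (1 - (0:ℝ) ^ q) ^ a = 0 := by
    rw [Real.one_rpow]
    simp [Real.zero_rpow (ne_of_gt ha)]
  rw [h10] at h
  linarith

lemma poch_aux {p q : ℝ} (hp : 1 < p) (hq : 1 < q) (n : ℕ) :
    (ascPochhammer ℝ n).eval ((1 - 1/p) + 1/q) *
        (∫ y in (0:ℝ)..1, (1 - y ^ q) ^ ((n:ℝ) - 1/p)) =
      (ascPochhammer ℝ n).eval (1 - 1/p) *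
        (∫ y in (0:ℝ)..1, (1 - y ^ q) ^ (-(1/p))) := by
  have hp0 : (0:ℝ) < p := by linarith
  have hq0 : (0:ℝ) < q := by linarith
  have hip : 1/p < 1 := by rw [div_lt_one hp0]; linarith
  induction n with
  | zero =>
    simp only [Nat.cast_zero, ascPochhammer_zero, Polynomial.eval_one, one_mul, zero_sub]
  | succ n ih =>
    set a : ℝ := ((n:ℝ) + 1) - 1/p with ha_def
    have ha : 0 < a := by
      have : (0:ℝ) ≤ (n:ℝ) := Nat.cast_nonneg n
      simp only [ha_def]; linarith
    have hrec := recursion_aux hq ha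
    have ha1 : a - 1 = (n:ℝ) - 1/p := by simp only [ha_def]; ring
    rw [ha1] at hrec
    set Ja := ∫ y in (0:ℝ)..1, (1 - y ^ q) ^ a with hJa
    set Jn := ∫ y in (0:ℝ)..1, (1 - y ^ q) ^ ((n:ℝ) - 1/p) with hJn
    set J0 := ∫ y in (0:ℝ)..1, (1 - y ^ q) ^ (-(1/p)) with hJ0
    have hkey : ((1 - 1/p + 1/q) + n) * Ja = a * Jn := by
      have hq' : q ≠ 0 := ne_of_gt hq0
      have : ((1 - 1/p + 1/q) + n) = (1 + a * q) / q := by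
        rw [ha_def]; field_simp; ring
      rw [this, div_mul_eq_mul_div, hrec]
      field_simp
    rw [ascPochhammer_succ_eval, ascPochhammer_succ_eval]
    have hcast : ((↑(n + 1):ℝ) - 1/p) = a := by push_cast [ha_def]; ring
    rw [hcast]
    calc (ascPochhammer ℝ n).eval (1 - 1/p + 1/q) * (1 - 1/p + 1/q + n) * Ja
        = (ascPochhammer ℝ n).eval (1 - 1/p + 1/q) * (((1 - 1/p + 1/q) + n) * Ja) := by ring
      _ = (ascPochhammer ℝ n).eval (1 - 1/p + 1/q) * (a * Jn) := by rw [hkey]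
      _ = a * ((ascPochhammer ℝ n).eval (1 - 1/p + 1/q) * Jn) := by ring
      _ = a * ((ascPochhammer ℝ n).eval (1 - 1/p) * J0) := by rw [ih]
      _ = (ascPochhammer ℝ n).eval (1 - 1/p) * (1 - 1/p + n) * J0 := by
          simp only [ha_def]; ring



section main
variable {p q : ℝ}

lemma hfint (hp : 1 < p) (hq : 1 < q) :
    IntervalIntegrable (fun y : ℝ => (1 - y ^ q) ^ (-(1 / p))) volume 0 1 := by
  have hp0 : (0:ℝ) < p := by linarith
  have h1 : 1 / p < 1 := by rw [div_lt_one hp0]; linarith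
  exact integrable_aux hq (by linarith)

lemma gArcsin_continuousOn (hp : 1 < p) (hq : 1 < q) :
    ContinuousOn (gArcsin p q) (Icc 0 1) := by
  have h := continuousOn_primitive_interval'
    (f := fun y : ℝ => (1 - y ^ q) ^ (-(1 / p))) (μ := volume) (a := 0)
    (hfint hp hq) (by rw [uIcc_of_le zero_le_one]; exact ⟨le_rfl, zero_le_one⟩)
  rwa [uIcc_of_le zero_le_one] at h

lemma gArcsin_hasDerivAt (hp : 1 < p) (hq : 1 < q) {y : ℝ} (hy : y ∈ Ico (0:ℝ) 1) :
    HasDerivAt (gArcsin p q) ((1 - y ^ q) ^ (-(1 / p))) y := by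
  have hq0 : (0:ℝ) < q := by linarith
  have hmono : IntervalIntegrable (fun y : ℝ => (1 - y ^ q) ^ (-(1 / p))) volume 0 y :=
    (hfint hp hq).mono_set (by
      rw [uIcc_of_le hy.1, uIcc_of_le zero_le_one]
      exact Icc_subset_Icc le_rfl hy.2.le)
  have hmeas : StronglyMeasurableAtFilter
      (fun y : ℝ => (1 - y ^ q) ^ (-(1 / p))) (nhds y) := by
    have : Measurable (fun y : ℝ => (1 - y ^ q) ^ (-(1 / p))) := by measurability
    exact this.stronglyMeasurable.stronglyMeasurableAtFilter
  have hcont : ContinuousAt (fun y : ℝ => (1 - y ^ q) ^ (-(1 / p))) y := by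
    have hbase : 0 < 1 - y ^ q := by
      have : y ^ q < 1 := by
        rcases eq_or_lt_of_le hy.1 with h | h
        · rw [← h, Real.zero_rpow (ne_of_gt hq0)]; norm_num
        · exact Real.rpow_lt_one h.le hy.2 hq0
      linarith
    have hcq : Continuous fun y : ℝ => y ^ q := by
      rw [continuous_iff_continuousAt]; intro x
      exact Real.continuousAt_rpow_const x q (Or.inr hq0.le)
    exact ((continuous_const.sub hcq).continuousAt).rpow_const (Or.inl (ne_of_gt hbase))
  exact intervalIntegral.integral_hasDerivAt_right hmono hmeas hcont

lemma gArcsin_strictMono (hp : 1 < p) (hq : 1 < q) :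
    StrictMonoOn (gArcsin p q) (Icc 0 1) := by
  have hq0 : (0:ℝ) < q := by linarith
  intro x hx y hy hxy
  have hxy' : IntervalIntegrable (fun y : ℝ => (1 - y ^ q) ^ (-(1 / p))) volume x y :=
    (hfint hp hq).mono_set (by
      rw [uIcc_of_le hxy.le, uIcc_of_le zero_le_one]
      exact Icc_subset_Icc hx.1 hy.2)
  have h0x : IntervalIntegrable (fun y : ℝ => (1 - y ^ q) ^ (-(1 / p))) volume 0 x :=
    (hfint hp hq).mono_set (by
      rw [uIcc_of_le hx.1, uIcc_of_le zero_le_one]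
      exact Icc_subset_Icc le_rfl hx.2)
  have hpos : 0 < ∫ t in x..y, (1 - t ^ q) ^ (-(1 / p)) := by
    refine intervalIntegral_pos_of_pos_on hxy' (fun t ht => ?_) hxy
    have hbase : 0 < 1 - t ^ q := by
      have h1 : t ^ q < 1 := by
        have ht0 : 0 < t := lt_of_le_of_lt hx.1 ht.1
        exact Real.rpow_lt_one ht0.le (lt_of_lt_of_le ht.2 hy.2) hq0
      linarith
    exact Real.rpow_pos_of_pos hbase _
  have hsplit : gArcsin p q x + (∫ t in x..y, (1 - t ^ q) ^ (-(1 / p))) = gArcsin p q y :=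
    intervalIntegral.integral_add_adjacent_intervals h0x hxy'
  simp only [gArcsin] at *
  linarith

lemma gArcsin_zero : gArcsin p q 0 = 0 := intervalIntegral.integral_same

lemma gArcsin_nonneg (hp : 1 < p) (hq : 1 < q) {y : ℝ} (hy : y ∈ Icc (0:ℝ) 1) :
    gArcsin p q y ∈ Icc (0:ℝ) (gArcsin p q 1) := by
  constructor
  · rw [← gArcsin_zero (p := p) (q := q)]
    exact ((gArcsin_strictMono hp hq).monotoneOn) (by simp) hy hy.1
  · exact ((gArcsin_strictMono hp hq).monotoneOn) hy (by simp) hy.2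

end main


section main2
variable {p q : ℝ} {S C : ℝ → ℝ}

lemma gPi_half (p q : ℝ) : gPi p q / 2 = gArcsin p q 1 := by unfold gPi; ring

lemma C_formula (hp : 1 < p) (hq : 1 < q) (hS : IsGSin p q S) (hC : IsGCos p q S C)
    {y : ℝ} (hy : y ∈ Ico (0:ℝ) 1) :
    C (gArcsin p q y) = (1 - y ^ q) ^ (1 / p) := by
  have hq0 : (0:ℝ) < q := by linarith
  have hy' : y ∈ Icc (0:ℝ) 1 := ⟨hy.1, hy.2.le⟩
  have hmem : gArcsin p q y ∈ Icc (0:ℝ) (gPi p q / 2) := by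
    rw [gPi_half]; exact gArcsin_nonneg hp hq hy'
  have hg : HasDerivWithinAt (gArcsin p q) ((1 - y ^ q) ^ (-(1 / p))) (Icc 0 1) y :=
    (gArcsin_hasDerivAt hp hq hy).hasDerivWithinAt
  have maps : MapsTo (gArcsin p q) (Icc 0 1) (Icc (0:ℝ) (gPi p q / 2)) := by
    intro z hz
    rw [gPi_half]
    exact gArcsin_nonneg hp hq hz
  have comp := (hC _ hmem).comp y hg maps
  have hcongr : HasDerivWithinAt (fun z : ℝ => z)
      (C (gArcsin p q y) * (1 - y ^ q) ^ (-(1 / p))) (Icc 0 1) y := by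
    refine comp.congr (fun z hz => ?_) ?_
    · exact (hS z hz).symm
    · exact (hS y hy').symm
  have hid : HasDerivWithinAt (fun z : ℝ => z) 1 (Icc (0:ℝ) 1) y :=
    (hasDerivAt_id y).hasDerivWithinAt
  have hud : UniqueDiffWithinAt ℝ (Icc (0:ℝ) 1) y := uniqueDiffOn_Icc zero_lt_one y hy'
  have heq : C (gArcsin p q y) * (1 - y ^ q) ^ (-(1 / p)) = 1 := by
    rw [← hcongr.derivWithin hud, hid.derivWithin hud]
  have hbase : 0 < 1 - y ^ q := by
    have : y ^ q < 1 := by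
      rcases eq_or_lt_of_le hy.1 with h | h
      · rw [← h, Real.zero_rpow (ne_of_gt hq0)]; norm_num
      · exact Real.rpow_lt_one h.le hy.2 hq0
    linarith
  have hne : (1 - y ^ q) ^ (-(1 / p)) ≠ 0 := ne_of_gt (Real.rpow_pos_of_pos hbase _)
  have heq2 : (1 - y ^ q) ^ (1 / p) * (1 - y ^ q) ^ (-(1 / p)) = 1 := by
    rw [← Real.rpow_add hbase]
    simp
  exact mul_right_cancel₀ hne (heq.trans heq2.symm)

end main2

/-- Corollary 3.5, fourth formula:
`∫₀^{π_{p,q}/2} cos_{p,q}^{pn} t dt = (1/p*)ₙ/((1/p* + 1/q)ₙ) · π_{p,q}/2`. -/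
theorem stmt_13 (p q : ℝ) (n : ℕ) (hp : 1 < p) (hq : 1 < q)
    (S C : ℝ → ℝ) (hS : IsGSin p q S) (hC : IsGCos p q S C) :
    ∫ t in (0:ℝ)..(gPi p q / 2), C t ^ (p * (n : ℝ)) =
      (ascPochhammer ℝ n).eval (1 / (p / (p - 1))) /
          (ascPochhammer ℝ n).eval (1 / (p / (p - 1)) + 1 / q) *
        (gPi p q / 2) := by
  have hp0 : (0:ℝ) < p := by linarith
  have hq0 : (0:ℝ) < q := by linarith
  have hip : 1 / p < 1 := by rw [div_lt_one hp0]; linarith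
  have hip0 : 0 < 1 / p := by positivity
  set L : ℝ := gArcsin p q 1 with hLdef
  have hL : gPi p q / 2 = L := gPi_half p q
  have hLpos : 0 < L := by
    have := gArcsin_strictMono hp hq (left_mem_Icc.mpr zero_le_one)
      (right_mem_Icc.mpr zero_le_one) zero_lt_one
    rwa [gArcsin_zero] at this
  have hcq : Continuous fun y : ℝ => y ^ q := by
    rw [continuous_iff_continuousAt]; intro x
    exact Real.continuousAt_rpow_const x q (Or.inr hq0.le)
  -- surjectivity
  have hsurj : ∀ t ∈ Icc (0:ℝ) L, ∃ y ∈ Icc (0:ℝ) 1, gArcsin p q y = t := by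
    have h1 := intermediate_value_Icc zero_le_one (gArcsin_continuousOn hp hq)
    rw [gArcsin_zero] at h1
    intro t ht
    exact h1 ht
  -- continuity of S
  have hScont : ContinuousOn S (Icc 0 L) := by
    intro x hx
    rw [← hL] at hx ⊢
    exact (hC x hx).continuousWithinAt
  -- the auxiliary integrand h
  set h : ℝ → ℝ := fun t => (1 - S t ^ q) ^ n with hhdef
  have hhcont : ContinuousOn h (Icc 0 L) :=
    (continuousOn_const.sub (hcq.comp_continuousOn hScont)).pow n
  -- step 1 : a.e. congruence
  have hexp_ne : (n:ℝ) - 1 / p ≠ 0 := by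
    rcases Nat.eq_zero_or_pos n with rfl | hn
    · simpa using ne_of_lt (by linarith : -(1/p) < 0)
    · have : (1:ℝ) ≤ (n:ℝ) := by exact_mod_cast hn
      exact ne_of_gt (by linarith)
  have step1 : ∫ t in (0:ℝ)..L, C t ^ (p * (n:ℝ)) = ∫ t in (0:ℝ)..L, h t := by
    apply intervalIntegral.integral_congr_ae
    have hne : ∀ᵐ t : ℝ, t ≠ L := by
      exact compl_mem_ae_iff.mpr (measure_singleton (α := ℝ) L)
    filter_upwards [hne] with t htne ht
    rw [uIoc_of_le hLpos.le] at ht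
    obtain ⟨y, hy, hgy⟩ := hsurj t ⟨ht.1.le, ht.2⟩
    have hy1 : y ≠ 1 := fun hh => htne (by rw [← hgy, hh])
    have hyIco : y ∈ Ico (0:ℝ) 1 := ⟨hy.1, lt_of_le_of_ne hy.2 hy1⟩
    have hCt : C t = (1 - y ^ q) ^ (1 / p) := by
      rw [← hgy]; exact C_formula hp hq hS hC hyIco
    have hSt : S t = y := by rw [← hgy]; exact hS y hy
    have hbase : (0:ℝ) ≤ 1 - y ^ q := by
      have : y ^ q < 1 := by
        rcases eq_or_lt_of_le hyIco.1 with hh | hh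
        · rw [← hh, Real.zero_rpow (ne_of_gt hq0)]; norm_num
        · exact Real.rpow_lt_one hh.le hyIco.2 hq0
      linarith
    rw [hCt, hhdef]
    simp only [hSt]
    rw [← Real.rpow_mul hbase]
    have : 1 / p * (p * (n:ℝ)) = (n:ℝ) := by field_simp
    rw [this, Real.rpow_natCast]
  -- pointwise identity on [0,1]
  have heqk : ∀ x ∈ Icc (0:ℝ) 1,
      (h ∘ gArcsin p q) x * (1 - x ^ q) ^ (-(1/p)) = (1 - x ^ q) ^ ((n:ℝ) - 1/p) := by
    intro x hx
    have hSx : S (gArcsin p q x) = x := hS x hx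
    simp only [Function.comp_apply, hhdef, hSx]
    rcases eq_or_lt_of_le hx.2 with rfl | hx1
    · rw [Real.one_rpow, sub_self, Real.zero_rpow (neg_ne_zero.mpr (ne_of_gt hip0)), mul_zero,
        Real.zero_rpow hexp_ne]
    · have hbase : 0 < 1 - x ^ q := pos_aux hq0 hx.1 hx1
      rw [← Real.rpow_natCast (1 - x ^ q) n, ← Real.rpow_add hbase, ← sub_eq_add_neg]
  have hinf : ((0:ℝ) ⊓ 1) = 0 := inf_eq_left.mpr zero_le_one
  have hsup : ((0:ℝ) ⊔ 1) = 1 := sup_eq_right.mpr zero_le_one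
  have h01 : uIcc (0:ℝ) 1 = Icc (0:ℝ) 1 := uIcc_of_le zero_le_one
  have hk : IntervalIntegrable (fun x : ℝ => (1 - x ^ q) ^ ((n:ℝ) - 1/p)) volume 0 1 :=
    integrable_aux hq (by linarith)
  -- step 2 : change of variables
  have gmapsto : ∀ z ∈ Icc (0:ℝ) 1, gArcsin p q z ∈ Icc (0:ℝ) L :=
    fun z hz => gArcsin_nonneg hp hq hz
  have step2 : ∫ x in (0:ℝ)..1, (h ∘ gArcsin p q) x * (1 - x ^ q) ^ (-(1/p)) =
      ∫ u in (0:ℝ)..L, h u := by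
    have hcv := intervalIntegral.integral_comp_mul_deriv'''
      (f := gArcsin p q) (f' := fun x => (1 - x ^ q) ^ (-(1/p))) (g := h)
      (a := 0) (b := 1)
      (by simpa [h01, hinf, hsup] using gArcsin_continuousOn hp hq)
      (by
        intro x hx
        simp only [hinf, hsup] at hx
        exact (gArcsin_hasDerivAt hp hq ⟨hx.1.le, hx.2⟩).hasDerivWithinAt)
      (by
        refine hhcont.mono ?_
        simp only [hinf, hsup]
        rintro t ⟨z, hz, rfl⟩
        exact gmapsto z ⟨hz.1.le, hz.2.le⟩)
      (by
        apply ContinuousOn.integrableOn_compact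
        · exact isCompact_Icc.image_of_continuousOn
            (by simpa [h01, hinf, hsup] using gArcsin_continuousOn hp hq)
        · refine hhcont.mono ?_
          simp only [h01, hinf, hsup]
          rintro t ⟨z, hz, rfl⟩
          exact gmapsto z hz)
      (by
        simp only [h01, hinf, hsup]
        have hkon : IntegrableOn (fun x : ℝ => (1 - x ^ q) ^ ((n:ℝ) - 1/p)) (Icc 0 1) volume :=
          (intervalIntegrable_iff_integrableOn_Icc_of_le zero_le_one).mp hk
        exact hkon.congr_fun (fun x hx => (heqk x hx).symm) measurableSet_Icc)
    rw [gArcsin_zero] at hcv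
    exact hcv
  have hint_eq : ∫ x in (0:ℝ)..1, (h ∘ gArcsin p q) x * (1 - x ^ q) ^ (-(1/p)) =
      ∫ x in (0:ℝ)..1, (1 - x ^ q) ^ ((n:ℝ) - 1/p) := by
    apply intervalIntegral.integral_congr
    simp only [h01, hinf, hsup]
    exact fun x hx => heqk x hx
  -- step 3 : conclude via the Pochhammer recursion
  have hP := poch_aux hp hq n
  have hPc : 0 < (ascPochhammer ℝ n).eval (1 - 1/p + 1/q) := by
    apply ascPochhammer_pos
    have : 0 < 1/q := by positivity
    linarith
  have harg : 1 / (p / (p - 1)) = 1 - 1/p := by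
    rw [one_div_div]
    field_simp
  have hJ0 : (∫ y in (0:ℝ)..1, (1 - y ^ q) ^ (-(1/p))) = L := rfl
  rw [harg, hL, step1, ← step2, hint_eq, eq_comm, div_mul_eq_mul_div,
    div_eq_iff (ne_of_gt hPc)]
  rw [hJ0] at hP
  linarith [hP]
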